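/- Let E be a complex vector space, α > 0, and let q : E → [0,∞) satisfy: (i) q(x) = 0 if and only if x = 0; (ii) q(c·x) = |c|^α q(x) for all c ∈ ℂ and x ∈ E; (iii) q(x+y) ≤ q(x) + q(y) for all x, y ∈ E. Equip E with the metric d(x,y) = q(x−y). Then the following are equivalent: (1) E is finite-dimensional over ℂ; (2) every sequence in the closed ball B = {x ∈ E : q(x) ≤ 1} has a subsequence converging in the metric d; (3) every sequence in the sphere S = {x ∈ E : q(x) = 1} has a subsequence converging in the metric d. -/

import Mathlib

open Filter
set_option linter.unusedSectionVars false
set_option linter.unusedVariables false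
set_option maxHeartbeats 1000000

noncomputable def rieszSeq' {E : Type*} (pick : List E → E) : ℕ → E
  | n => pick (List.ofFn (fun m : Fin n => rieszSeq' pick m.1))
decreasing_by exact m.2

section Helpers
variable {E : Type*} [AddCommGroup E] [Module ℂ E]
    (α : ℝ) (hα : 0 < α) (q : E → ℝ)
    (hq_nonneg : ∀ x, 0 ≤ q x)
    (hq_eq_zero : ∀ x, q x = 0 ↔ x = 0)
    (hq_smul : ∀ (c : ℂ) (x : E), q (c • x) = ‖c‖ ^ α * q x)
    (hq_add : ∀ x y, q (x + y) ≤ q x + q y)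

include hq_eq_zero in
lemma q_zero' : q 0 = 0 := (hq_eq_zero 0).2 rfl

include hq_smul in
lemma q_neg' (x : E) : q (-x) = q x := by
  have := hq_smul (-1) x
  simpa [Real.one_rpow] using this

include hq_eq_zero hq_add in
lemma q_sum' {ι : Type*} (s : Finset ι) (f : ι → E) :
    q (∑ i ∈ s, f i) ≤ ∑ i ∈ s, q (f i) := by
  classical
  induction s using Finset.induction with
  | empty => simp [q_zero' q hq_eq_zero]
  | insert _ _ h ih =>
      rw [Finset.sum_insert h, Finset.sum_insert h]
      exact le_trans (hq_add _ _) (by linarith)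

include hq_eq_zero hq_smul hq_add in
lemma q_sum_smul' {ι : Type*} [Fintype ι] (d : ι → ℂ) (v : ι → E) :
    q (∑ i, d i • v i) ≤ ∑ i, ‖d i‖ ^ α * q (v i) := by
  refine le_trans (q_sum' q hq_eq_zero hq_add _ _) ?_
  exact Finset.sum_le_sum fun i _ => le_of_eq (hq_smul _ _)

include hα in
lemma tendsto_aux' {ι : Type*} [Fintype ι] (c : ℕ → ι → ℂ) (w : ι → ℂ) (v : ι → E)
    (hc : Tendsto c atTop (nhds w)) :
    Tendsto (fun k => ∑ i, ‖c k i - w i‖ ^ α * q (v i)) atTop (nhds 0) := by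
  have : Tendsto (fun k => ∑ i : ι, ‖c k i - w i‖ ^ α * q (v i)) atTop
      (nhds (∑ i : ι, ‖(0:ℝ)‖ ^ α * q (v i))) := by
    refine tendsto_finset_sum _ fun i _ => Tendsto.mul_const _ ?_
    refine Tendsto.rpow_const ?_ (Or.inr hα.le)
    have h1 : Tendsto (fun k => c k i - w i) atTop (nhds 0) := by
      have := (continuous_apply i).continuousAt.tendsto.comp hc
      simpa using this.sub_const (w i)
    simpa using h1.norm
  simpa [Real.zero_rpow hα.ne'] using this

include hα hq_nonneg hq_eq_zero hq_smul hq_add in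
lemma lower_bound' {n : ℕ} (b : Fin n → E) (hb : LinearIndependent ℂ b) :
    ∃ m > 0, ∀ c : Fin n → ℂ, m * ‖c‖ ^ α ≤ q (∑ i, c i • b i) := by
  classical
  rcases Nat.eq_zero_or_pos n with hn | hn
  · subst hn
    refine ⟨1, one_pos, fun c => ?_⟩
    have hc : c = 0 := Subsingleton.elim _ _
    have hn0 : ‖c‖ = 0 := by rw [hc]; exact norm_zero
    simp [hn0, Real.zero_rpow hα.ne', (hq_eq_zero (0:E)).2 rfl]
  set Q : (Fin n → ℂ) → ℝ := fun c => q (∑ i, c i • b i) with hQ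
  -- key: |Q c - Q c'| ≤ Q (c - c')
  have hQsub : ∀ c c' : Fin n → ℂ, |Q c - Q c'| ≤ Q (c - c') := by
    intro c c'
    have hsplit : ∀ x y : Fin n → ℂ, Q (x + y) ≤ Q x + Q y := by
      intro x y
      have : (∑ i, (x + y) i • b i) = (∑ i, x i • b i) + ∑ i, y i • b i := by
        rw [← Finset.sum_add_distrib]; exact Finset.sum_congr rfl fun i _ => by
          simp [add_smul]
      rw [hQ]; simp only []; rw [this]; exact hq_add _ _
    have hQneg : ∀ x : Fin n → ℂ, Q (-x) = Q x := by
      intro x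
      have : (∑ i, (-x) i • b i) = -(∑ i, x i • b i) := by
        rw [← Finset.sum_neg_distrib]; exact Finset.sum_congr rfl fun i _ => by simp
      rw [hQ]; simp only []; rw [this]
      have := hq_smul (-1) (∑ i, x i • b i)
      simpa [Real.one_rpow] using this
    rw [abs_sub_le_iff]
    constructor
    · have := hsplit (c - c') c'; simpa using this
    · have := hsplit (c' - c) c
      have h2 : Q (c' - c) = Q (c - c') := by
        have := hQneg (c - c'); simpa [neg_sub] using this
      simpa [h2] using this
  have hQcont : Continuous Q := by
    rw [continuous_iff_continuousAt]
    intro c₀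
    have hzero : Tendsto (fun c => Q c - Q c₀) (nhds c₀) (nhds 0) := by
      refine squeeze_zero_norm (a := fun c : Fin n → ℂ => ∑ i, ‖c i - c₀ i‖ ^ α * q (b i)) (fun c => ?_) ?_
      · refine le_trans (hQsub c c₀) ?_
        refine le_trans (q_sum_smul' α q hq_eq_zero hq_smul hq_add (c - c₀) b) ?_
        exact le_of_eq (Finset.sum_congr rfl fun i _ => by simp)
      · have : Tendsto (fun c : Fin n → ℂ => ∑ i, ‖c i - c₀ i‖ ^ α * q (b i)) (nhds c₀)
            (nhds (∑ i : Fin n, ‖(0:ℝ)‖ ^ α * q (b i))) := by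
          refine tendsto_finset_sum _ fun i _ => Tendsto.mul_const _ ?_
          refine Tendsto.rpow_const ?_ (Or.inr hα.le)
          have h1 : Tendsto (fun c : Fin n → ℂ => c i - c₀ i) (nhds c₀) (nhds 0) := by
            have := ((continuous_apply i).tendsto c₀).sub_const (c₀ i)
            simpa using this
          simpa using h1.norm
        simpa [Real.zero_rpow hα.ne'] using this
    have := hzero.add_const (Q c₀)
    exact (by simpa using this : Tendsto (fun x => Q x) (nhds c₀) (nhds (Q c₀)))
  haveI : Nonempty (Fin n) := ⟨⟨0, hn⟩⟩
  have hsc : IsCompact (Metric.sphere (0 : Fin n → ℂ) 1) := isCompact_sphere 0 1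
  have hsne : (Metric.sphere (0 : Fin n → ℂ) 1).Nonempty :=
    NormedSpace.sphere_nonempty.2 zero_le_one
  obtain ⟨c₀, hc₀, hmin⟩ := hsc.exists_isMinOn hsne hQcont.continuousOn
  have hc₀norm : ‖c₀‖ = 1 := by simpa using hc₀
  have hm : 0 < Q c₀ := by
    rcases (hq_nonneg _).lt_or_eq with h | h
    · exact h
    · exfalso
      have h0 : (∑ i, c₀ i • b i) = 0 := (hq_eq_zero _).1 h.symm
      have := Fintype.linearIndependent_iff.1 hb c₀ h0
      have : c₀ = 0 := funext this
      rw [this] at hc₀norm; simp at hc₀norm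
  refine ⟨Q c₀, hm, fun c => ?_⟩
  rcases eq_or_ne c 0 with rfl | hc
  · simp [Real.zero_rpow hα.ne', hq_nonneg]
  · have hcn : (0:ℝ) < ‖c‖ := norm_pos_iff.2 hc
    set t : ℝ := ‖c‖
    set u : Fin n → ℂ := (t⁻¹ : ℂ) • c with hu
    have hunorm : u ∈ Metric.sphere (0 : Fin n → ℂ) 1 := by
      simp only [mem_sphere_iff_norm, sub_zero, hu, norm_smul]
      rw [norm_inv]
      simp only [Complex.norm_real, Real.norm_eq_abs, abs_of_pos hcn]
      field_simp
      rfl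
    have hQu : Q c₀ ≤ Q u := hmin hunorm
    have hdecomp : (∑ i, c i • b i) = (t : ℂ) • ∑ i, u i • b i := by
      rw [Finset.smul_sum]
      refine Finset.sum_congr rfl fun i _ => ?_
      rw [hu]
      simp only [Pi.smul_apply, smul_eq_mul, ← smul_smul]
      rw [smul_smul, smul_smul]
      congr 1
      have ht : (t:ℂ) ≠ 0 := by exact_mod_cast hcn.ne'
      field_simp
    have : Q c = ‖(t:ℂ)‖ ^ α * Q u := by rw [hQ]; simp only []; rw [hdecomp, hq_smul]
    rw [hQ] at this ⊢
    simp only [] at this ⊢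
    rw [this]
    have hts : ‖(t:ℂ)‖ ^ α = t ^ α := by
      simp [Complex.norm_real, Real.norm_eq_abs, abs_of_pos hcn]
    rw [hts, mul_comm]
    exact mul_le_mul_of_nonneg_left hQu (Real.rpow_nonneg hcn.le α)

include hα hq_nonneg hq_eq_zero hq_smul hq_add in
lemma rpow_lt_aux {x ε : ℝ} (hx : 0 ≤ x) (hε : 0 < ε) (h : x ^ α < ε ^ α) : x < ε := by
  by_contra hle
  push_neg at hle
  exact absurd h (not_lt.2 (Real.rpow_le_rpow hε.le hle hα.le))

include hα hq_nonneg hq_eq_zero hq_smul hq_add in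
lemma complete' [FiniteDimensional ℂ E] (u : ℕ → E)
    (hu : ∀ ε > 0, ∃ N, ∀ k ≥ N, ∀ l ≥ N, q (u k - u l) < ε) :
    ∃ x, Tendsto (fun k => q (u k - x)) atTop (nhds 0) := by
  classical
  set b := Module.finBasis ℂ E with hbdef
  obtain ⟨m, hm, hlow⟩ := lower_bound' α hα q hq_nonneg hq_eq_zero hq_smul hq_add (⇑b) b.linearIndependent
  set c : ℕ → Fin (Module.finrank ℂ E) → ℂ := fun k => b.equivFun (u k) with hc
  have hrepr : ∀ (d : Fin (Module.finrank ℂ E) → ℂ), (∑ i, d i • b i) = b.equivFun.symm d :=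
    fun d => (b.equivFun_symm_apply d).symm
  have hsub : ∀ k l, (∑ i, (c k i - c l i) • b i) = u k - u l := by
    intro k l
    have : (fun i => c k i - c l i) = b.equivFun (u k - u l) := by
      rw [map_sub]; rfl
    rw [show (∑ i, (c k i - c l i) • b i) = ∑ i, (b.equivFun (u k - u l)) i • b i from by
      rw [← this],
      hrepr, LinearEquiv.symm_apply_apply]
  have hcauchy : CauchySeq c := by
    rw [Metric.cauchySeq_iff]
    intro ε hε
    obtain ⟨N, hN⟩ := hu (m * ε ^ α) (mul_pos hm (Real.rpow_pos_of_pos hε α))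
    refine ⟨N, fun k hk l hl => ?_⟩
    have h1 : m * ‖c k - c l‖ ^ α ≤ q (u k - u l) := by
      have := hlow (c k - c l)
      rwa [show (∑ i, (c k - c l) i • b i) = u k - u l from by
        simpa using hsub k l] at this
    have h2 : m * ‖c k - c l‖ ^ α < m * ε ^ α := lt_of_le_of_lt h1 (hN k hk l hl)
    have h3 : ‖c k - c l‖ ^ α < ε ^ α := lt_of_mul_lt_mul_left h2 hm.le
    rw [dist_eq_norm]
    exact rpow_lt_aux α hα q hq_nonneg hq_eq_zero hq_smul hq_add (norm_nonneg _) hε h3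
  obtain ⟨w, hw⟩ := cauchySeq_tendsto_of_complete hcauchy
  refine ⟨b.equivFun.symm w, ?_⟩
  refine squeeze_zero (fun k => hq_nonneg _) (fun k => ?_)
    (tendsto_aux' α hα q c w (⇑b) hw)
  have hdiff : u k - b.equivFun.symm w = ∑ i, (c k i - w i) • b i := by
    have h1 : (∑ i, (c k i - w i) • b i) = b.equivFun.symm (c k - w) := by
      rw [← hrepr]; rfl
    rw [h1, map_sub, LinearEquiv.symm_apply_apply]
  rw [hdiff]
  exact q_sum_smul' α q hq_eq_zero hq_smul hq_add _ _

include hα hq_nonneg hq_eq_zero hq_smul hq_add in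
lemma ball_subseq' [FiniteDimensional ℂ E] (u : ℕ → E) (hu : ∀ n, q (u n) ≤ 1) :
    ∃ (x : E) (φ : ℕ → ℕ), StrictMono φ ∧
      Tendsto (fun n => q (u (φ n) - x)) atTop (nhds 0) := by
  classical
  set b := Module.finBasis ℂ E with hbdef
  obtain ⟨m, hm, hlow⟩ := lower_bound' α hα q hq_nonneg hq_eq_zero hq_smul hq_add (⇑b) b.linearIndependent
  set c : ℕ → Fin (Module.finrank ℂ E) → ℂ := fun k => b.equivFun (u k) with hc
  have hrepr : ∀ k, (∑ i, c k i • b i) = u k := fun k => by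
    rw [show (∑ i, c k i • b i) = b.equivFun.symm (c k) from (b.equivFun_symm_apply _).symm]
    exact b.equivFun.symm_apply_apply _
  have hbound : ∀ k, c k ∈ Metric.closedBall (0 : Fin (Module.finrank ℂ E) → ℂ) (m⁻¹ ^ α⁻¹) := by
    intro k
    rw [Metric.mem_closedBall, dist_zero_right]
    have h1 : m * ‖c k‖ ^ α ≤ 1 := le_trans (by rw [← hrepr k]; exact hlow (c k)) (hu k)
    have h2 : ‖c k‖ ^ α ≤ m⁻¹ := by
      rw [← one_div, le_div_iff₀ hm]; linarith
    calc ‖c k‖ = (‖c k‖ ^ α) ^ α⁻¹ := (Real.rpow_rpow_inv (norm_nonneg _) hα.ne').symm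
      _ ≤ m⁻¹ ^ α⁻¹ := Real.rpow_le_rpow (Real.rpow_nonneg (norm_nonneg _) _) h2 (by positivity)
  obtain ⟨w, -, φ, hφ, hwt⟩ := (isCompact_closedBall (0 : Fin (Module.finrank ℂ E) → ℂ)
    (m⁻¹ ^ α⁻¹)).tendsto_subseq hbound
  refine ⟨b.equivFun.symm w, φ, hφ, ?_⟩
  refine squeeze_zero (fun k => hq_nonneg _) (fun k => ?_)
    (tendsto_aux' α hα q (c ∘ φ) w (⇑b) hwt)
  have hdiff : u (φ k) - b.equivFun.symm w = ∑ i, ((c ∘ φ) k i - w i) • b i := by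
    have h1 : (∑ i, ((c ∘ φ) k i - w i) • b i) = b.equivFun.symm (c (φ k) - w) := by
      rw [b.equivFun_symm_apply]
      exact Finset.sum_congr rfl fun i _ => by simp [Function.comp]
    rw [h1, map_sub, LinearEquiv.symm_apply_apply]
  rw [hdiff]
  exact q_sum_smul' α q hq_eq_zero hq_smul hq_add _ _

include hα hq_nonneg hq_eq_zero hq_smul hq_add in
lemma riesz' (F : Submodule ℂ E) [FiniteDimensional ℂ ↥F] (hF : F ≠ ⊤) :
    ∃ x : E, q x = 1 ∧ ∀ y ∈ F, 1/2 ≤ q (x - y) := by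
  classical
  obtain ⟨x₀, hx₀⟩ : ∃ x₀, x₀ ∉ F := by
    by_contra h
    push_neg at h
    exact hF (Submodule.eq_top_iff'.2 h)
  set S : Set ℝ := (fun y : F => q (x₀ - ↑y)) '' Set.univ with hS
  have hSne : S.Nonempty := ⟨q (x₀ - 0), ⟨0, Set.mem_univ _, by simp⟩⟩
  have hSbd : BddBelow S := ⟨0, fun r ⟨y, _, hy⟩ => hy ▸ hq_nonneg _⟩
  set δ := sInf S with hδ
  have hδ0 : 0 ≤ δ := le_csInf hSne fun r ⟨y, _, hy⟩ => hy ▸ hq_nonneg _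
  have hδle : ∀ y ∈ F, δ ≤ q (x₀ - y) := fun y hy =>
    csInf_le hSbd ⟨⟨y, hy⟩, Set.mem_univ _, rfl⟩
  have hδpos : 0 < δ := by
    rcases hδ0.lt_or_eq with h | h
    · exact h
    exfalso
    have hch : ∀ k : ℕ, ∃ y : F, q (x₀ - ↑y) < 1 / (k + 1) := by
      intro k
      have h1 : δ < 1 / (k + 1 : ℝ) := by
        rw [← h]; positivity
      obtain ⟨r, ⟨y, -, hy⟩, hr⟩ := exists_lt_of_csInf_lt hSne h1
      have hy' : q (x₀ - ↑y) = r := hy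
      exact ⟨y, hy' ▸ hr⟩
    choose y hy using hch
    have hcauchy : ∀ ε > 0, ∃ N, ∀ k ≥ N, ∀ l ≥ N,
        (fun z : F => q ↑z) (y k - y l) < ε := by
      intro ε hε
      obtain ⟨N, hN⟩ := exists_nat_one_div_lt (half_pos hε)
      refine ⟨N, fun k hk l hl => ?_⟩
      have hkb : q (x₀ - ↑(y k)) < ε / 2 := lt_of_lt_of_le (hy k) (by
        calc (1 : ℝ) / (k + 1) ≤ 1 / (N + 1) := by gcongr
          _ ≤ ε / 2 := hN.le)
      have hlb : q (x₀ - ↑(y l)) < ε / 2 := lt_of_lt_of_le (hy l) (by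
        calc (1 : ℝ) / (l + 1) ≤ 1 / (N + 1) := by gcongr
          _ ≤ ε / 2 := hN.le)
      have hd : ((y k - y l : F) : E) = (↑(y k) - x₀) + (x₀ - ↑(y l)) := by
        push_cast; abel
      simp only [hd]
      calc q ((↑(y k) - x₀) + (x₀ - ↑(y l)))
          ≤ q (↑(y k) - x₀) + q (x₀ - ↑(y l)) := hq_add _ _
        _ = q (x₀ - ↑(y k)) + q (x₀ - ↑(y l)) := by
            rw [show (↑(y k) - x₀ : E) = -(x₀ - ↑(y k)) from (neg_sub _ _).symm,
              q_neg' α q hq_smul (x₀ - ↑(y k))]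
        _ < ε / 2 + ε / 2 := by linarith
        _ = ε := by ring
    obtain ⟨x, hx⟩ := complete' α hα (fun z : F => q ↑z)
      (fun z => hq_nonneg _)
      (fun z => by simpa using hq_eq_zero (z : E))
      (fun cc z => hq_smul cc (z : E))
      (fun a b => hq_add (a : E) (b : E))
      y hcauchy
    have hqx : q (x₀ - ↑x) = 0 := by
      by_contra hne
      have hpos : 0 < q (x₀ - ↑x) := (hq_nonneg _).lt_of_ne (Ne.symm hne)
      have ht1 : Tendsto (fun k => q ((y k : E) - ↑x)) atTop (nhds 0) := by
        have heq : ∀ k, ((y k - x : F) : E) = (y k : E) - ↑x := fun k => rfl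
        simpa [heq] using hx
      obtain ⟨N1, hN1⟩ := (eventually_atTop.1 ((tendsto_order.1 ht1).2 _ (half_pos hpos)))
      obtain ⟨N2, hN2⟩ := exists_nat_one_div_lt (half_pos hpos)
      set k := max N1 N2
      have h1 : q ((y k : E) - ↑x) < q (x₀ - ↑x) / 2 := hN1 k (le_max_left _ _)
      have h2 : q (x₀ - ↑(y k)) < q (x₀ - ↑x) / 2 := lt_of_lt_of_le (hy k) (by
        calc (1:ℝ) / (k + 1) ≤ 1 / (N2 + 1) := by
              gcongr
              exact_mod_cast le_max_right N1 N2
          _ ≤ _ := hN2.le)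
      have h3 : q (x₀ - ↑x) ≤ q (x₀ - ↑(y k)) + q ((y k : E) - ↑x) := by
        calc q (x₀ - ↑x) = q ((x₀ - ↑(y k)) + ((y k : E) - ↑x)) := by
              rw [show (x₀ - ↑(y k)) + ((y k : E) - ↑x) = x₀ - ↑x from by abel]
          _ ≤ _ := hq_add _ _
      linarith
    have hxe : x₀ = ↑x := by
      have := (hq_eq_zero _).1 hqx
      rwa [sub_eq_zero] at this
    exact hx₀ (hxe ▸ x.2)
  obtain ⟨r, ⟨y₀, -, hy₀⟩, hr2⟩ := exists_lt_of_csInf_lt hSne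
    (show δ < 2 * δ by linarith)
  have hy₀' : q (x₀ - ↑y₀) = r := hy₀
  set r₀ := q (x₀ - ↑y₀) with hr₀
  have hrpos : 0 < r₀ := by
    rcases (hq_nonneg (x₀ - ↑y₀)).lt_or_eq with h | h
    · exact h
    exfalso
    have h2 := (hq_eq_zero _).1 h.symm
    rw [sub_eq_zero] at h2
    exact hx₀ (h2 ▸ y₀.2)
  have hrlt : r₀ < 2 * δ := hy₀' ▸ hr2
  have hrδ : δ ≤ r₀ := hδle _ y₀.2
  set t : ℝ := r₀ ^ (-α⁻¹) with ht
  have htpos : 0 < t := Real.rpow_pos_of_pos hrpos _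
  set c : ℂ := (t : ℂ) with hc
  have hcnorm : ‖c‖ ^ α = r₀⁻¹ := by
    rw [hc, Complex.norm_real, Real.norm_eq_abs, abs_of_pos htpos, ht,
      ← Real.rpow_mul hrpos.le,
      show -α⁻¹ * α = -1 from by field_simp, Real.rpow_neg_one]
  refine ⟨c • (x₀ - ↑y₀), ?_, ?_⟩
  · rw [hq_smul, hcnorm, ← hr₀, inv_mul_cancel₀ hrpos.ne']
  · intro y hyF
    have hc0 : c ≠ 0 := by
      simp only [hc, ne_eq, Complex.ofReal_eq_zero]
      exact htpos.ne'
    have hdecomp : c • (x₀ - ↑y₀) - y = c • (x₀ - (↑y₀ + c⁻¹ • y)) := by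
      rw [smul_sub, smul_sub, smul_add, smul_smul, mul_inv_cancel₀ hc0, one_smul]
      abel
    rw [hdecomp, hq_smul, hcnorm]
    have hy' : (↑y₀ + c⁻¹ • y) ∈ F := F.add_mem y₀.2 (F.smul_mem _ hyF)
    have hd2 := hδle _ hy'
    calc (1:ℝ)/2 = (2*δ)⁻¹ * δ := by field_simp
      _ ≤ r₀⁻¹ * δ := by gcongr
      _ ≤ r₀⁻¹ * q (x₀ - (↑y₀ + c⁻¹ • y)) :=
          mul_le_mul_of_nonneg_left hd2 (by positivity)

include hα hq_nonneg hq_eq_zero hq_smul hq_add in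
lemma sphere_to_findim' 
    (h3 : ∀ u : ℕ → E, (∀ n, q (u n) = 1) →
      ∃ (x : E) (φ : ℕ → ℕ), StrictMono φ ∧
        Tendsto (fun n => q (u (φ n) - x)) atTop (nhds 0)) :
    FiniteDimensional ℂ E := by
  classical
  by_contra hnf
  have hpick : ∀ l : List E, ∃ x : E, q x = 1 ∧
      ∀ y ∈ Submodule.span ℂ {z | z ∈ l}, 1/2 ≤ q (x - y) := by
    intro l
    haveI : FiniteDimensional ℂ ↥(Submodule.span ℂ {z | z ∈ l}) :=
      FiniteDimensional.span_of_finite ℂ l.finite_toSet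
    refine riesz' α hα q hq_nonneg hq_eq_zero hq_smul hq_add _ ?_
    intro htop
    exact hnf ⟨⟨l.toFinset, by simpa using htop⟩⟩
  choose pick hpick1 hpick2 using hpick
  set u : ℕ → E := rieszSeq' pick with hu
  have hunfold : ∀ n, u n = pick (List.ofFn (fun m : Fin n => u m.1)) := by
    intro n
    rw [hu]
    rw [rieszSeq']
  have hq1 : ∀ n, q (u n) = 1 := fun n => by rw [hunfold n]; exact hpick1 _
  have hsep : ∀ m n : ℕ, m < n → 1/2 ≤ q (u n - u m) := by
    intro m n hmn
    rw [hunfold n]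
    refine hpick2 _ _ (Submodule.subset_span ?_)
    simp only [Set.mem_setOf_eq, List.mem_ofFn]
    exact ⟨⟨m, hmn⟩, rfl⟩
  obtain ⟨x, φ, hφ, ht⟩ := h3 u hq1
  obtain ⟨N, hN⟩ := eventually_atTop.1 ((tendsto_order.1 ht).2 _ (by norm_num : (0:ℝ) < 1/4))
  have h1 : q (u (φ (N+1)) - x) < 1/4 := hN (N+1) (Nat.le_succ N)
  have h2 : q (u (φ N) - x) < 1/4 := hN N le_rfl
  have hlt : φ N < φ (N+1) := hφ (Nat.lt_succ_self N)
  have hs := hsep (φ N) (φ (N+1)) hlt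
  have htri : q (u (φ (N+1)) - u (φ N)) ≤ q (u (φ (N+1)) - x) + q (u (φ N) - x) := by
    calc q (u (φ (N+1)) - u (φ N))
        = q ((u (φ (N+1)) - x) + (x - u (φ N))) := by
          rw [show (u (φ (N+1)) - x) + (x - u (φ N)) = u (φ (N+1)) - u (φ N) from by abel]
      _ ≤ q (u (φ (N+1)) - x) + q (x - u (φ N)) := hq_add _ _
      _ = q (u (φ (N+1)) - x) + q (u (φ N) - x) := by
          rw [show (x - u (φ N)) = -(u (φ N) - x) from (neg_sub _ _).symm,
            q_neg' α q hq_smul]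
  linarith

end Helpers

/-- Proposition 2.5: Riesz-type finiteness criterion for quasi-normed complex vector spaces.
Given a quasi-norm `q` on a complex vector space `E` (with homogeneity exponent `α > 0`),
the following are equivalent: `E` is finite-dimensional; every sequence in the closed unit
ball `{q ≤ 1}` has a subsequence converging in the metric `d(x,y) = q(x−y)`; every sequence
in the unit sphere `{q = 1}` has a subsequence converging in this metric. -/
theorem stmt_3 {E : Type*} [AddCommGroup E] [Module ℂ E]
    (α : ℝ) (hα : 0 < α) (q : E → ℝ)
    (hq_nonneg : ∀ x, 0 ≤ q x)
    (hq_eq_zero : ∀ x, q x = 0 ↔ x = 0)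
    (hq_smul : ∀ (c : ℂ) (x : E), q (c • x) = ‖c‖ ^ α * q x)
    (hq_add : ∀ x y, q (x + y) ≤ q x + q y) :
    List.TFAE
      [FiniteDimensional ℂ E,
       ∀ u : ℕ → E, (∀ n, q (u n) ≤ 1) →
         ∃ (x : E) (φ : ℕ → ℕ), StrictMono φ ∧
           Tendsto (fun n => q (u (φ n) - x)) atTop (nhds 0),
       ∀ u : ℕ → E, (∀ n, q (u n) = 1) →
         ∃ (x : E) (φ : ℕ → ℕ), StrictMono φ ∧
           Tendsto (fun n => q (u (φ n) - x)) atTop (nhds 0)] := by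
  tfae_have 1 → 2 := by
    intro h u hu
    haveI := h
    exact ball_subseq' α hα q hq_nonneg hq_eq_zero hq_smul hq_add u hu
  tfae_have 2 → 3 := by
    intro h u hu
    exact h u (fun n => (hu n).le)
  tfae_have 3 → 1 := by
    intro h
    exact sphere_to_findim' α hα q hq_nonneg hq_eq_zero hq_smul hq_add h
  tfae_finish
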